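/- Let θ be an irrational number in (0,1) with continued fraction convergents p_n/q_n and partial quotients a_n, let k ≥ 2 be an integer, and suppose a_{n+1} ≥ k. Define d_m = 1 + (⌊mθ⌋ mod k) for m ≥ 1. Then d_{k q_n + r} = d_r for every integer r with 1 ≤ r ≤ q_n + q_{n-1} - 1. -/

import Mathlib

/-- The Gauss-map iterates of `θ`: `cfTheta θ 0 = θ` and
`cfTheta θ (n+1) = {1 / cfTheta θ n}` (fractional part), so that
`θ = [0; a₁, a₂, ...]` with `aₙ = ⌊1 / cfTheta θ (n-1)⌋`. -/
noncomputable def cfTheta (θ : ℝ) : ℕ → ℝ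
  | 0 => θ
  | n + 1 => Int.fract (1 / cfTheta θ n)

/-- The `n`-th partial quotient `aₙ` (for `n ≥ 1`) of the continued fraction
expansion `θ = [0; a₁, a₂, ...]` of `θ ∈ (0,1)`. -/
noncomputable def cfA (θ : ℝ) (n : ℕ) : ℤ := ⌊1 / cfTheta θ (n - 1)⌋

/-- Numerators `pₙ` of the convergents of `θ = [0; a₁, a₂, ...]`:
`p₋₁ = 1`, `p₀ = 0`, `p_{n+1} = a_{n+1} pₙ + p_{n-1}`. -/
noncomputable def cfP (θ : ℝ) : ℕ → ℤ
  | 0 => 0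
  | 1 => 1
  | n + 2 => cfA θ (n + 2) * cfP θ (n + 1) + cfP θ n

/-- Denominators `qₙ` of the convergents of `θ = [0; a₁, a₂, ...]`:
`q₋₁ = 0`, `q₀ = 1`, `q_{n+1} = a_{n+1} qₙ + q_{n-1}`. -/
noncomputable def cfQ (θ : ℝ) : ℕ → ℤ
  | 0 => 1
  | 1 => cfA θ 1
  | n + 2 => cfA θ (n + 2) * cfQ θ (n + 1) + cfQ θ n

section

variable (θ : ℝ) (hθ : Irrational θ) (hθ01 : θ ∈ Set.Ioo (0:ℝ) 1)

include hθ hθ01 in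
lemma cfTheta_prop : ∀ m, Irrational (cfTheta θ m) ∧ cfTheta θ m ∈ Set.Ioo (0:ℝ) 1 := by
  intro m
  induction m with
  | zero => exact ⟨hθ, hθ01⟩
  | succ m ih =>
    obtain ⟨h1, h2⟩ := ih
    have hinv : Irrational (1 / cfTheta θ m) := by
      rw [one_div]; exact h1.inv
    have hirr : Irrational (cfTheta θ (m+1)) := by
      show Irrational (Int.fract (1 / cfTheta θ m))
      rw [Int.fract]
      exact hinv.sub_intCast _
    refine ⟨hirr, ?_, ?_⟩
    · rcases lt_or_eq_of_le (Int.fract_nonneg (1 / cfTheta θ m)) with h | h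
      · exact h
      · exact absurd h.symm hirr.ne_zero
    · exact Int.fract_lt_one _

include hθ hθ01 in
lemma cfA_ge_one (m : ℕ) : 1 ≤ cfA θ (m + 1) := by
  have h := cfTheta_prop θ hθ hθ01 m
  have : (1:ℝ) ≤ 1 / cfTheta θ m := by
    rw [le_div_iff₀ h.2.1]
    nlinarith [h.2.2]
  show 1 ≤ ⌊1 / cfTheta θ ((m+1) - 1)⌋
  rw [Nat.add_sub_cancel]
  exact Int.le_floor.2 (by exact_mod_cast this)

include hθ hθ01 in
lemma cfQ_ge_one : ∀ m, 1 ≤ cfQ θ m := by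
  have key : ∀ m, 1 ≤ cfQ θ m ∧ 1 ≤ cfQ θ (m + 1) := by
    intro m
    induction m with
    | zero => exact ⟨le_refl _, by simpa [cfQ] using cfA_ge_one θ hθ hθ01 0⟩
    | succ m ih =>
      refine ⟨ih.2, ?_⟩
      show 1 ≤ cfA θ (m+2) * cfQ θ (m+1) + cfQ θ m
      have ha := cfA_ge_one θ hθ hθ01 (m+1)
      nlinarith [ih.1, ih.2]
  exact fun m => (key m).1

/-- `cfProd θ m = θ₀ θ₁ ⋯ θₘ`. -/
noncomputable def cfProd (θ : ℝ) (m : ℕ) : ℝ := ∏ i ∈ Finset.range (m+1), cfTheta θ i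

include hθ hθ01 in
lemma cfProd_pos (m : ℕ) : 0 < cfProd θ m :=
  Finset.prod_pos fun i _ => (cfTheta_prop θ hθ hθ01 i).2.1

include hθ hθ01 in
lemma cfProd_lt_one : ∀ m, cfProd θ m < 1 := by
  intro m
  induction m with
  | zero => simpa [cfProd, cfTheta] using hθ01.2
  | succ m ih =>
    have h := (cfTheta_prop θ hθ hθ01 (m+1)).2
    have hp := cfProd_pos θ hθ hθ01 m
    have : cfProd θ (m+1) = cfProd θ m * cfTheta θ (m+1) := Finset.prod_range_succ _ _
    nlinarith [h.1, h.2]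

omit hθ hθ01 in
lemma cast_cfA_add (m : ℕ) :
    (cfA θ (m+1) : ℝ) + cfTheta θ (m+1) = 1 / cfTheta θ m := by
  show (⌊1 / cfTheta θ ((m+1)-1)⌋ : ℝ) + Int.fract (1 / cfTheta θ m) = 1 / cfTheta θ m
  rw [Nat.add_sub_cancel, Int.fract]
  ring

include hθ hθ01 in
lemma eta_eq : ∀ m, (cfQ θ m : ℝ) * θ - cfP θ m = (-1)^m * cfProd θ m := by
  have key : ∀ m, ((cfQ θ m : ℝ) * θ - cfP θ m = (-1)^m * cfProd θ m) ∧
      ((cfQ θ (m+1) : ℝ) * θ - cfP θ (m+1) = (-1)^(m+1) * cfProd θ (m+1)) := by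
    intro m
    induction m with
    | zero =>
      constructor
      · simp [cfQ, cfP, cfProd, cfTheta]
      · have h := cast_cfA_add θ 0
        have hne : θ ≠ 0 := hθ.ne_zero
        show (cfQ θ 1 : ℝ) * θ - cfP θ 1 = (-1)^1 * cfProd θ 1
        have hq : (cfQ θ 1 : ℝ) = (cfA θ 1 : ℝ) := by norm_cast
        have hp : (cfP θ 1 : ℝ) = 1 := by norm_cast
        have hprod : cfProd θ 1 = θ * cfTheta θ 1 := by
          simp [cfProd, Finset.prod_range_succ, cfTheta]
        have ht0 : cfTheta θ 0 = θ := rfl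
        rw [hq, hp, hprod]
        rw [ht0] at h
        field_simp at h
        nlinarith [h]
    | succ m ih =>
      refine ⟨ih.2, ?_⟩
      have h := cast_cfA_add θ (m+1)
      have htne : cfTheta θ (m+1) ≠ 0 := ne_of_gt (cfTheta_prop θ hθ hθ01 (m+1)).2.1
      have hkey : (cfA θ (m+2) : ℝ) * cfTheta θ (m+1) + cfTheta θ (m+1) * cfTheta θ (m+2) = 1 := by
        field_simp at h
        nlinarith [h]
      have hq : (cfQ θ (m+2) : ℝ) = (cfA θ (m+2) : ℝ) * cfQ θ (m+1) + cfQ θ m := by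
        push_cast [cfQ]; ring
      have hp : (cfP θ (m+2) : ℝ) = (cfA θ (m+2) : ℝ) * cfP θ (m+1) + cfP θ m := by
        push_cast [cfP]; ring
      have hpr1 : cfProd θ (m+1) = cfProd θ m * cfTheta θ (m+1) := Finset.prod_range_succ _ _
      have hpr2 : cfProd θ (m+2) = cfProd θ (m+1) * cfTheta θ (m+2) := Finset.prod_range_succ _ _
      show (cfQ θ (m+2) : ℝ) * θ - cfP θ (m+2) = (-1)^(m+2) * cfProd θ (m+2)
      rw [hq, hp, hpr2, hpr1]
      obtain ⟨ih1, ih2⟩ := ih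
      rw [hpr1] at ih2
      linear_combination (cfA θ (m+2) : ℝ) * ih2 + ih1 - (-1)^m * cfProd θ m * hkey
  exact fun m => (key m).1

lemma det_eq : ∀ m, cfP θ (m+1) * cfQ θ m - cfP θ m * cfQ θ (m+1) = (-1)^m := by
  intro m
  induction m with
  | zero => simp [cfP, cfQ]
  | succ m ih =>
    have hq : cfQ θ (m+2) = cfA θ (m+2) * cfQ θ (m+1) + cfQ θ m := rfl
    have hp : cfP θ (m+2) = cfA θ (m+2) * cfP θ (m+1) + cfP θ m := rfl
    rw [hq, hp]
    have : ((-1:ℤ))^(m+1) = -((-1)^m) := by ring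
    rw [this]
    linear_combination -ih

lemma mul_nonneg_of_nonpos_nonpos' {a b : ℝ} (ha : a ≤ 0) (hb : b ≤ 0) : 0 ≤ a * b := by
  nlinarith

lemma key_lemma (e f : ℝ) (he : e < 0) (hf : 0 < f) (x y q Q : ℤ)
    (hq : 1 ≤ q) (hQ : 1 ≤ Q)
    (h1 : 0 < (x:ℝ) * e + y * f) (h2 : (x:ℝ) * e + y * f < f) :
    x * Q + y * q ≤ 0 ∨ Q + q ≤ x * Q + y * q := by
  rcases le_or_gt y 0 with hy | hy
  · left
    have hyf : (y:ℝ) * f ≤ 0 := mul_nonpos_of_nonpos_of_nonneg (by exact_mod_cast hy) hf.le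
    have hxe : 0 < (x:ℝ) * e := by linarith
    have hx : x < 0 := by
      by_contra hc
      push_neg at hc
      have : (x:ℝ) * e ≤ 0 := mul_nonpos_of_nonneg_of_nonpos (by exact_mod_cast hc) he.le
      linarith
    nlinarith
  · right
    have hy1 : 1 ≤ y := hy
    have hyf : f ≤ (y:ℝ) * f := by
      have : (1:ℝ) ≤ (y:ℝ) := by exact_mod_cast hy1
      nlinarith
    have hxe : (x:ℝ) * e < 0 := by linarith
    have hx : 1 ≤ x := by
      by_contra hc
      push_neg at hc
      have hx0 : x ≤ 0 := by omega
      have : 0 ≤ (x:ℝ) * e := mul_nonneg_of_nonpos_nonpos' (by exact_mod_cast hx0) he.le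
      linarith
    nlinarith

end

section
variable (θ : ℝ)

lemma no_approx (e f : ℝ) (he : e < 0) (hf : 0 < f) (P p Q q : ℤ)
    (hq : 1 ≤ q) (hQ : 1 ≤ Q)
    (heps : (P * q - p * Q) * (P * q - p * Q) = 1)
    (he_def : e = (Q:ℝ) * θ - P) (hf_def : f = (q:ℝ) * θ - p)
    (r v : ℤ) (hr1 : 1 ≤ r) (hr2 : r ≤ Q + q - 1)
    (hV1 : 0 < (r:ℝ) * θ - v) (hV2 : (r:ℝ) * θ - v < f) : False := by
  have key : ∀ x y : ℤ, x * Q + y * q = r → x * P + y * p = v → False := by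
    intro x y hxr hxv
    have hV : (r:ℝ) * θ - v = (x:ℝ) * e + y * f := by
      rw [← hxr, ← hxv, he_def, hf_def]; push_cast; ring
    have h1 : 0 < (x:ℝ) * e + y * f := hV ▸ hV1
    have h2 : (x:ℝ) * e + y * f < f := hV ▸ hV2
    have h := key_lemma e f he hf x y q Q hq hQ h1 h2
    rw [hxr] at h
    omega
  refine key ((P*q - p*Q) * (q * v - p * r)) ((P*q - p*Q) * (P * r - Q * v)) ?_ ?_
  · linear_combination r * heps
  · linear_combination v * heps

end

/-- Let `θ ∈ (0,1)` be irrational with partial quotients `aₙ` and convergents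
`pₙ/qₙ`, let `k ≥ 2` with `a_{n+1} ≥ k`, and `d_m = 1 + (⌊mθ⌋ mod k)`.
Then `d_{k qₙ + r} = d_r` for every `1 ≤ r ≤ qₙ + q_{n-1} - 1`. -/
theorem davison_repetition (θ : ℝ) (hθ : Irrational θ) (hθ01 : θ ∈ Set.Ioo (0:ℝ) 1)
    (k : ℕ) (hk : 2 ≤ k) (n : ℕ) (hn : 1 ≤ n) (ha : (k : ℤ) ≤ cfA θ (n + 1))
    (d : ℤ → ℤ) (hd : ∀ m : ℤ, 1 ≤ m → d m = 1 + ⌊(m : ℝ) * θ⌋ % (k : ℤ))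
    (r : ℤ) (hr1 : 1 ≤ r) (hr2 : r ≤ cfQ θ n + cfQ θ (n - 1) - 1) :
    d ((k : ℤ) * cfQ θ n + r) = d r := by
  obtain ⟨m, rfl⟩ : ∃ m, n = m + 1 := ⟨n - 1, by omega⟩
  have hr2' : r ≤ cfQ θ (m+1) + cfQ θ m - 1 := by simpa using hr2
  have ha' : (k:ℤ) ≤ cfA θ (m+2) := ha
  have hq1 : 1 ≤ cfQ θ m := cfQ_ge_one θ hθ hθ01 m
  have hQ1 : 1 ≤ cfQ θ (m+1) := cfQ_ge_one θ hθ hθ01 (m+1)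
  have hee := eta_eq θ hθ hθ01 (m+1)
  have hff := eta_eq θ hθ hθ01 m
  have hgg := eta_eq θ hθ hθ01 (m+2)
  set e : ℝ := (cfQ θ (m+1) : ℝ) * θ - (cfP θ (m+1) : ℝ) with he_def
  set f : ℝ := (cfQ θ m : ℝ) * θ - (cfP θ m : ℝ) with hf_def
  set g : ℝ := (cfQ θ (m+2) : ℝ) * θ - (cfP θ (m+2) : ℝ) with hg_def
  have hrec : g = (cfA θ (m+2) : ℝ) * e + f := by
    rw [hg_def, he_def, hf_def]
    have h1 : (cfQ θ (m+2) : ℝ) = (cfA θ (m+2):ℝ) * cfQ θ (m+1) + cfQ θ m := by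
      push_cast [cfQ]; ring
    have h2 : (cfP θ (m+2) : ℝ) = (cfA θ (m+2):ℝ) * cfP θ (m+1) + cfP θ m := by
      push_cast [cfP]; ring
    rw [h1, h2]; ring
  have hdet := det_eq θ m
  have heps : (cfP θ (m+1) * cfQ θ m - cfP θ m * cfQ θ (m+1)) *
      (cfP θ (m+1) * cfQ θ m - cfP θ m * cfQ θ (m+1)) = 1 := by
    rw [hdet]
    rcases Nat.even_or_odd m with h | h
    · rw [h.neg_one_pow]; ring
    · rw [h.neg_one_pow]; ring
  have hp0 := cfProd_pos θ hθ hθ01 m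
  have hp1 := cfProd_pos θ hθ hθ01 (m+1)
  have hp2 := cfProd_pos θ hθ hθ01 (m+2)
  set F : ℝ := Int.fract ((r:ℝ) * θ) with hF_def
  have hFeq : F = (r:ℝ) * θ - (⌊(r:ℝ)*θ⌋ : ℝ) := by rw [hF_def, Int.fract]
  have hF1 : F < 1 := Int.fract_lt_one _
  have hFirr : Irrational F := by
    rw [hFeq]
    exact (hθ.intCast_mul (by omega : r ≠ 0)).sub_intCast _
  have hF0 : 0 < F := by
    rcases lt_or_eq_of_le (Int.fract_nonneg ((r:ℝ)*θ)) with h | h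
    · exact h
    · exact absurd h.symm hFirr.ne_zero
  have hkR : (k:ℝ) ≤ (cfA θ (m+2) : ℝ) := by exact_mod_cast ha'
  have hk0 : (0:ℝ) < (k:ℝ) := by positivity
  have hbound : 0 < F + (k:ℝ) * e ∧ F + (k:ℝ) * e < 1 := by
    rcases Nat.even_or_odd m with hm | hm
    · -- m even : f > 0, e < 0, g > 0
      have hfpos : 0 < f := by rw [hff, hm.neg_one_pow]; linarith
      have heneg : e < 0 := by
        rw [hee, (Even.add_one hm).neg_one_pow]; linarith
      have hgpos : 0 < g := by
        have : Even (m+2) := by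
          rcases hm with ⟨t, ht⟩; exact ⟨t+1, by omega⟩
        rw [hgg, this.neg_one_pow]; linarith
      have hFge : f ≤ F := by
        by_contra hc
        push_neg at hc
        exact no_approx θ e f heneg hfpos (cfP θ (m+1)) (cfP θ m) (cfQ θ (m+1)) (cfQ θ m)
          hq1 hQ1 heps he_def hf_def r ⌊(r:ℝ)*θ⌋ hr1 hr2'
          (by rw [← hFeq]; exact hF0) (by rw [← hFeq]; exact hc)
      have h1 : (cfA θ (m+2) : ℝ) * e ≤ (k:ℝ) * e := by nlinarith
      have h2 : (k:ℝ) * e < 0 := mul_neg_of_pos_of_neg hk0 heneg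
      constructor
      · linarith
      · linarith
    · -- m odd : f < 0 < e, g < 0
      have hfneg : f < 0 := by rw [hff, hm.neg_one_pow]; linarith
      have hepos : 0 < e := by
        have : Even (m+1) := by rcases hm with ⟨t, ht⟩; exact ⟨t+1, by omega⟩
        rw [hee, this.neg_one_pow]; linarith
      have hgneg : g < 0 := by
        have : Odd (m+2) := by rcases hm with ⟨t, ht⟩; exact ⟨t+1, by omega⟩
        rw [hgg, this.neg_one_pow]; linarith
      have hFle : F ≤ 1 + f := by
        by_contra hc
        push_neg at hc
        refine no_approx (-θ) (-e) (-f) (by linarith) (by linarith)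
          (-cfP θ (m+1)) (-cfP θ m) (cfQ θ (m+1)) (cfQ θ m) hq1 hQ1
          (by linear_combination heps) (by rw [he_def]; push_cast; ring)
          (by rw [hf_def]; push_cast; ring) r (-(⌊(r:ℝ)*θ⌋ + 1)) hr1 hr2' ?_ ?_
        · push_cast
          nlinarith [hFeq, hF1]
        · push_cast
          nlinarith [hFeq, hc]
      have h1 : (k:ℝ) * e ≤ (cfA θ (m+2) : ℝ) * e :=
        mul_le_mul_of_nonneg_right hkR hepos.le
      have h2 : 0 < (k:ℝ) * e := mul_pos hk0 hepos
      constructor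
      · linarith
      · linarith
  obtain ⟨hb1, hb2⟩ := hbound
  have hfloor0 : ⌊F + (k:ℝ) * e⌋ = 0 := by
    rw [Int.floor_eq_zero_iff]
    exact ⟨hb1.le, hb2⟩
  have hcast : (((k:ℤ) * cfQ θ (m+1) + r : ℤ) : ℝ) * θ =
      (((k:ℤ) * cfP θ (m+1) + ⌊(r:ℝ)*θ⌋ : ℤ) : ℝ) + (F + (k:ℝ) * e) := by
    rw [hFeq, he_def]; push_cast; ring
  have hfloor : ⌊(((k:ℤ) * cfQ θ (m+1) + r : ℤ) : ℝ) * θ⌋ =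
      (k:ℤ) * cfP θ (m+1) + ⌊(r:ℝ)*θ⌋ := by
    rw [hcast, Int.floor_intCast_add, hfloor0, add_zero]
  have hm1 : (1:ℤ) ≤ (k:ℤ) * cfQ θ (m+1) + r := by
    have hk1 : (1:ℤ) ≤ (k:ℤ) := by exact_mod_cast Nat.one_le_of_lt hk
    nlinarith
  rw [hd _ hm1, hd r hr1, hfloor]
  congr 1
  rw [mul_comm, add_comm, Int.add_mul_emod_self_right]
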